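/- In any triangulation of a connected closed surface, the subgraph G₁ of the dual graph induced by the faces whose z-monodromy is the identity permutation contains no cycle, i.e., G₁ is a forest. -/

import Mathlib

open Finset

/-- A (combinatorial) triangulation of a connected closed surface:
a finite set of triangular faces such that every edge lies in exactly two
faces, two distinct faces meet in at most an edge, and the dual graph is
connected. -/
structure Triangulation (V : Type) [Fintype V] [DecidableEq V] where
  faces : Finset (Finset V)
  faces_nonempty : faces.Nonempty
  card_eq : ∀ F ∈ faces, F.card = 3
  edge_two_faces : ∀ e : Finset V, e.card = 2 → (∃ F ∈ faces, e ⊆ F) →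
      (faces.filter fun F => e ⊆ F).card = 2
  inter_le : ∀ F ∈ faces, ∀ F' ∈ faces, F ≠ F' → (F ∩ F').card ≤ 2
  connected : ∀ F ∈ faces, ∀ F' ∈ faces,
      Relation.ReflTransGen
        (fun A B => A ∈ faces ∧ B ∈ faces ∧ (A ∩ B).card = 2) F F'

namespace Triangulation

variable {V : Type} [Fintype V] [DecidableEq V] (T : Triangulation V)

/-- `e` is an edge of the triangulation. -/
def IsEdge (e : Finset V) : Prop := e.card = 2 ∧ ∃ F ∈ T.faces, e ⊆ F

/-- A zigzag sequence: consecutive edges are adjacent (distinct, sharing a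
vertex and a face), the faces containing consecutive pairs are distinct, and
edges two apart are disjoint. -/
def IsZigzagSeq (f : ℕ → Finset V) : Prop :=
  (∀ i, T.IsEdge (f i)) ∧
  (∀ i, f i ≠ f (i + 1) ∧ (f i ∩ f (i + 1)).Nonempty ∧
      ∃ F ∈ T.faces, f i ⊆ F ∧ f (i + 1) ⊆ F) ∧
  (∀ i, ∀ F ∈ T.faces, ∀ F' ∈ T.faces,
      f i ⊆ F → f (i + 1) ⊆ F → f (i + 1) ⊆ F' → f (i + 2) ⊆ F' → F ≠ F') ∧
  (∀ i, f i ∩ f (i + 2) = ∅)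

/-- A zigzag: a zigzag sequence together with its (minimal) period. -/
structure Zigzag where
  seq : ℕ → Finset V
  period : ℕ
  period_pos : 0 < period
  periodic : ∀ i, seq (i + period) = seq i
  period_min : ∀ m, 0 < m → (∀ i, seq (i + m) = seq i) → period ≤ m
  isZigzag : T.IsZigzagSeq seq

variable {T}

/-- Two zigzags are the same cyclic sequence (up to a shift). -/
def Zigzag.Equiv (Z Z' : T.Zigzag) : Prop := ∃ k, ∀ i, Z'.seq i = Z.seq (i + k)

/-- `Z'` is the reversal of `Z` (up to a shift). -/
def Zigzag.IsReverseOf (Z' Z : T.Zigzag) : Prop :=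
  ∃ k, ∀ i, Z'.seq i = Z.seq (k + Z.period - i % Z.period)

/-- The zigzag `Z` contains an edge of the face `F`. -/
def Zigzag.Meets (Z : T.Zigzag) (F : Finset V) : Prop := ∃ i, Z.seq i ⊆ F

/-- `F` is the `i`-th face of the face shadow of `Z`, i.e. the face containing
the `i`-th and `(i+1)`-st edges of `Z`. -/
def Zigzag.ShadowAt (Z : T.Zigzag) (i : ℕ) (F : Finset V) : Prop :=
  F ∈ T.faces ∧ Z.seq i ⊆ F ∧ Z.seq (i + 1) ⊆ F

/-- At position `i`, the zigzag `Z` traverses the oriented edge from `x`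
to `y` (the head `y` is the vertex shared with the next edge). -/
def Zigzag.Passes (Z : T.Zigzag) (i : ℕ) (x y : V) : Prop :=
  Z.seq i = {x, y} ∧ x ≠ y ∧ y ∈ Z.seq (i + 1)

variable (T)

/-- The triangulation is locally z-knotted in the face `F`:
`𝒵(F) = {Z, Z⁻¹}`. -/
def LocallyZKnotted (F : Finset V) : Prop :=
  (∃ Z : T.Zigzag, Z.Meets F) ∧
  ∀ Z Z' : T.Zigzag, Z.Meets F → Z'.Meets F → Z.Equiv Z' ∨ Z'.IsReverseOf Z

/-- The triangulation is z-knotted: it has exactly one zigzag up to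
reversal. -/
def ZKnotted : Prop :=
  Nonempty T.Zigzag ∧ ∀ Z Z' : T.Zigzag, Z.Equiv Z' ∨ Z'.IsReverseOf Z

/-- The z-monodromy relation of the face `F`: `M_F` sends the oriented edge
`(x,y)` of `F` to the oriented edge `(u,v)` of `F`.  Here `(u,v)` is the first
oriented edge of `F` occurring in the zigzag through `D_F⁻¹(x,y), (x,y)`
after `(x,y)`. -/
def MonodromyRel (F : Finset V) (x y u v : V) : Prop :=
  x ∈ F ∧ y ∈ F ∧
  ∃ Z : T.Zigzag, ∃ i j : ℕ,
    (∃ z, z ∈ F ∧ z ≠ x ∧ z ≠ y ∧ Z.Passes i z x) ∧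
    Z.Passes (i + 1) x y ∧
    i + 1 < j ∧ Z.Passes j u v ∧ u ∈ F ∧ v ∈ F ∧
    (∀ k, i + 1 < k → k < j → ∀ a b, a ∈ F → b ∈ F → ¬ Z.Passes k a b)

/-- The z-monodromy of `F` is the identity (type (M1)). -/
def MFIsId (F : Finset V) : Prop :=
  ∀ x y, x ∈ F → y ∈ F → x ≠ y → T.MonodromyRel F x y x y

/-- The z-monodromy of `F` is `D_F` (type (M2)). -/
def MFIsD (F : Finset V) : Prop :=
  ∀ x y z : V, ({x, y, z} : Finset V) = F → x ≠ y → y ≠ z → x ≠ z →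
    T.MonodromyRel F x y y z

/-- The z-monodromy of `F` is `D_F⁻¹` (type (M5)). -/
def MFIsDInv (F : Finset V) : Prop :=
  ∀ x y z : V, ({x, y, z} : Finset V) = F → x ≠ y → y ≠ z → x ≠ z →
    T.MonodromyRel F x y z x

/-- The z-monodromy of `F` is of type (M3):
`M_F = (-e₁,e₂,e₃)(-e₃,-e₂,e₁)` for a cycle `(e₁,e₂,e₃)` of `D_F`. -/
def MFIsM3 (F : Finset V) : Prop :=
  ∃ x y z : V, ({x, y, z} : Finset V) = F ∧ x ≠ y ∧ y ≠ z ∧ x ≠ z ∧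
    T.MonodromyRel F y x y z ∧ T.MonodromyRel F y z z x ∧
    T.MonodromyRel F z x y x ∧ T.MonodromyRel F x z z y ∧
    T.MonodromyRel F z y x y ∧ T.MonodromyRel F x y x z

/-- The z-monodromy of `F` is of type (M4):
`M_F = (e₁,-e₂)(e₂,-e₁)` with `e₃, -e₃` fixed, for a cycle `(e₁,e₂,e₃)`
of `D_F`. -/
def MFIsM4 (F : Finset V) : Prop :=
  ∃ x y z : V, ({x, y, z} : Finset V) = F ∧ x ≠ y ∧ y ≠ z ∧ x ≠ z ∧
    T.MonodromyRel F x y z y ∧ T.MonodromyRel F z y x y ∧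
    T.MonodromyRel F y z y x ∧ T.MonodromyRel F y x y z ∧
    T.MonodromyRel F z x z x ∧ T.MonodromyRel F x z x z

/-- The dual graph: vertices are faces, adjacent iff they share an edge. -/
def dualGraph : SimpleGraph {F : Finset V // F ∈ T.faces} where
  Adj A B := A ≠ B ∧ ((A : Finset V) ∩ (B : Finset V)).card = 2
  symm := by
    refine ⟨?_⟩
    intro A B h
    exact ⟨h.1.symm, by rw [Finset.inter_comm]; exact h.2⟩
  loopless := by refine ⟨?_⟩; intro A h; exact h.1 rfl

end Triangulation

namespace Triangulation

variable {V : Type} [Fintype V] [DecidableEq V] {T : Triangulation V}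

lemma face_card {F : Finset V} (hF : F ∈ T.faces) : F.card = 3 := T.card_eq F hF

lemma two_faces {e A B C : Finset V} (he : e.card = 2)
    (hA : A ∈ T.faces) (hB : B ∈ T.faces) (hC : C ∈ T.faces)
    (heA : e ⊆ A) (heB : e ⊆ B) (heC : e ⊆ C) (hAB : A ≠ B) : C = A ∨ C = B := by
  have hcard := T.edge_two_faces e he ⟨A, hA, heA⟩
  have hsub : ({A, B} : Finset (Finset V)) ⊆ T.faces.filter (fun F => e ⊆ F) := by
    intro x hx
    simp only [Finset.mem_insert, Finset.mem_singleton] at hx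
    rcases hx with rfl | rfl <;> simp [Finset.mem_filter, hA, hB, heA, heB]
  have hpair : ({A, B} : Finset (Finset V)).card = 2 := Finset.card_pair hAB
  have heq : ({A, B} : Finset (Finset V)) = T.faces.filter (fun F => e ⊆ F) :=
    Finset.eq_of_subset_of_card_le hsub (by omega)
  have hCmem : C ∈ ({A, B} : Finset (Finset V)) := by
    rw [heq]; simp [Finset.mem_filter, hC, heC]
  simpa using hCmem

lemma triple_eq_face {F : Finset V} (hF : F ∈ T.faces) {a b c : V}
    (ha : a ∈ F) (hb : b ∈ F) (hc : c ∈ F)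
    (hab : a ≠ b) (hbc : b ≠ c) (hac : a ≠ c) : ({a, b, c} : Finset V) = F := by
  have hcard3 : ({a, b, c} : Finset V).card = 3 := by
    rw [Finset.card_insert_of_notMem (by simp [hab, hac]),
      Finset.card_insert_of_notMem (by simp [hbc]), Finset.card_singleton]
  apply Finset.eq_of_subset_of_card_le
  · intro x hx
    simp only [Finset.mem_insert, Finset.mem_singleton] at hx
    rcases hx with rfl | rfl | rfl <;> assumption
  · rw [face_card hF, hcard3]

lemma subset_three {s : Finset V} {a b c : V} (hs : s ⊆ ({a, b, c} : Finset V))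
    (h2 : s.card = 2) :
    s = {a, b} ∨ s = {b, c} ∨ s = {a, c} := by
  obtain ⟨x, y, hxy, rfl⟩ := Finset.card_eq_two.mp h2
  have hx : x ∈ ({a, b, c} : Finset V) := hs (by simp)
  have hy : y ∈ ({a, b, c} : Finset V) := hs (by simp)
  simp only [Finset.mem_insert, Finset.mem_singleton] at hx hy
  rcases hx with rfl | rfl | rfl <;> rcases hy with rfl | rfl | rfl <;>
    simp_all [Finset.pair_comm]

lemma pair_mem_of_card_two {s : Finset V} {c : V} (h2 : s.card = 2) (hc : c ∈ s) :
    ∃ d, c ≠ d ∧ s = {c, d} := by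
  obtain ⟨x, y, hxy, rfl⟩ := Finset.card_eq_two.mp h2
  simp only [Finset.mem_insert, Finset.mem_singleton] at hc
  rcases hc with rfl | rfl
  · exact ⟨y, hxy, rfl⟩
  · exact ⟨x, hxy.symm, Finset.pair_comm x c⟩

/-- The next edge of a zigzag is determined by two consecutive edges. -/
lemma det_step {f g : ℕ → Finset V} (hf : T.IsZigzagSeq f) (hg : T.IsZigzagSeq g)
    {i j : ℕ} (h0 : f i = g j) (h1 : f (i + 1) = g (j + 1)) : f (i + 2) = g (j + 2) := by
  obtain ⟨hfe, hfa, hf3, hf4⟩ := hf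
  obtain ⟨hge, hga, hg3, hg4⟩ := hg
  obtain ⟨hne0, hint0, Fs, hFs, hFs0, hFs1⟩ := hfa i
  obtain ⟨hne1, hint1, Hf, hHf, hHf1, hHf2⟩ := hfa (i + 1)
  obtain ⟨gne1, gint1, Hg, hHg, hHg1, hHg2⟩ := hga (j + 1)
  have hHfne : Fs ≠ Hf := hf3 i Fs hFs Hf hHf hFs0 hFs1 hHf1 hHf2
  have hHgne : Fs ≠ Hg := hg3 j Fs hFs Hg hHg (h0 ▸ hFs0) (h1 ▸ hFs1) (h1 ▸ hHg1) hHg2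
  have hHfg : Hf = Hg := by
    have h2 : (f (i + 1)).card = 2 := (hfe (i + 1)).1
    rcases two_faces h2 hFs hHf hHg hFs1 hHf1 (h1 ▸ hHg1) hHfne with h | h
    · exact absurd h.symm hHgne
    · exact h.symm
  -- the intersection of consecutive edges has exactly one element
  have hI : (f i ∩ f (i + 1)).card = 1 := by
    have h1' := Finset.card_pos.mpr hint0
    have hle2 : (f i ∩ f (i + 1)).card ≤ 2 :=
      le_trans (Finset.card_le_card Finset.inter_subset_left) (le_of_eq (hfe i).1)
    rcases Nat.lt_or_ge (f i ∩ f (i + 1)).card 2 with h | h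
    · omega
    · exfalso
      have e1 : f i ∩ f (i + 1) = f i :=
        Finset.eq_of_subset_of_card_le Finset.inter_subset_left (by rw [(hfe i).1]; omega)
      have e2 : f i ∩ f (i + 1) = f (i + 1) :=
        Finset.eq_of_subset_of_card_le Finset.inter_subset_right (by rw [(hfe (i+1)).1]; omega)
      exact hne0 (e1 ▸ e2)
  have hIH : f i ∩ f (i + 1) ⊆ Hf := fun x hx => hHf1 (Finset.mem_inter.mp hx).2
  have hsd : (Hf \ (f i ∩ f (i + 1))).card = 2 := by
    rw [Finset.card_sdiff_of_subset hIH, hI, face_card hHf]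
  have main : ∀ X : Finset V, X.card = 2 → X ⊆ Hf → f i ∩ X = ∅ →
      X = Hf \ (f i ∩ f (i + 1)) := by
    intro X hX2 hXH hXd
    apply Finset.eq_of_subset_of_card_le
    · intro x hx
      rw [Finset.mem_sdiff]
      refine ⟨hXH hx, fun hmem => ?_⟩
      have : x ∈ f i ∩ X := Finset.mem_inter.mpr ⟨(Finset.mem_inter.mp hmem).1, hx⟩
      rw [hXd] at this; exact absurd this (Finset.notMem_empty x)
    · rw [hsd, hX2]
  have e1 : f (i + 2) = Hf \ (f i ∩ f (i + 1)) :=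
    main _ (hfe (i + 2)).1 hHf2 (hf4 i)
  have e2 : g (j + 2) = Hf \ (f i ∩ f (i + 1)) := by
    apply main _ (hge (j + 2)).1 (hHfg ▸ hHg2)
    rw [h0]
    exact hg4 j
  rw [e1, e2]

lemma det {f g : ℕ → Finset V} (hf : T.IsZigzagSeq f) (hg : T.IsZigzagSeq g)
    {i j : ℕ} (h0 : f i = g j) (h1 : f (i + 1) = g (j + 1)) :
    ∀ m, f (i + m) = g (j + m) := by
  have H : ∀ m, f (i + m) = g (j + m) ∧ f (i + m + 1) = g (j + m + 1) := by
    intro m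
    induction m with
    | zero => exact ⟨h0, h1⟩
    | succ k ih => exact ⟨ih.2, det_step hf hg ih.1 ih.2⟩
  exact fun m => (H m).1

/-- A "configuration": the zigzag `Z` passes through the two consecutive
edges `{a,b}`, `{b,c}` of the face `F` at positions `t`, `t+1`. -/
def Cfg (T : Triangulation V) (Z : T.Zigzag) (F : Finset V) (t : ℕ) (a b c : V) : Prop :=
  Z.Passes t a b ∧ Z.Passes (t + 1) b c ∧ ({a, b, c} : Finset V) = F ∧
    a ≠ b ∧ b ≠ c ∧ a ≠ c ∧ F ∈ T.faces

/-- After a configuration in `F`, the zigzag enters the neighbouring face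
across the second edge. -/
lemma cfg_next {Z : T.Zigzag} {F : Finset V} {t : ℕ} {a b c : V}
    (h : Cfg T Z F t a b c) :
    ∃ G d, Cfg T Z G (t + 1) b c d ∧ G ≠ F ∧ d ∉ F ∧ Z.seq (t + 2) = {c, d} := by
  obtain ⟨hp0, hp1, hFeq, hab, hbc, hac, hFmem⟩ := h
  obtain ⟨hE, hA, h3, h4⟩ := Z.isZigzag
  have hs0 : Z.seq t = {a, b} := hp0.1
  have hs1 : Z.seq (t + 1) = {b, c} := hp1.1
  have hcmem : c ∈ Z.seq (t + 2) := hp1.2.2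
  obtain ⟨d, hcd, hs2⟩ := pair_mem_of_card_two (hE (t + 2)).1 hcmem
  have hdisj02 : Z.seq t ∩ Z.seq (t + 2) = ∅ := h4 t
  have hnot02 : ∀ x, x ∈ Z.seq t → x ∉ Z.seq (t + 2) := by
    intro x hx hx2
    have : x ∈ Z.seq t ∩ Z.seq (t + 2) := Finset.mem_inter.mpr ⟨hx, hx2⟩
    rw [hdisj02] at this; exact absurd this (Finset.notMem_empty x)
  have hbd : b ≠ d := by
    intro hbd
    exact hnot02 b (by rw [hs0]; simp) (by rw [hs2, hbd]; simp)
  have had : a ≠ d := by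
    intro had
    exact hnot02 a (by rw [hs0]; simp) (by rw [hs2, had]; simp)
  have hdF : d ∉ F := by
    rw [← hFeq]
    simp only [Finset.mem_insert, Finset.mem_singleton]
    push_neg
    exact ⟨fun e => had e.symm, fun e => hbd e.symm, fun e => hcd e.symm⟩
  obtain ⟨hne12, hint12, H, hH, hH1, hH2⟩ := hA (t + 1)
  have hsub0 : Z.seq t ⊆ F := by
    rw [hs0, ← hFeq]; intro x hx; simp only [Finset.mem_insert, Finset.mem_singleton] at hx ⊢; tauto
  have hsub1 : Z.seq (t + 1) ⊆ F := by
    rw [hs1, ← hFeq]; intro x hx; simp only [Finset.mem_insert, Finset.mem_singleton] at hx ⊢; tauto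
  have hHne : H ≠ F := (h3 t F hFmem H hH hsub0 hsub1 hH1 hH2).symm
  have hHeq : ({b, c, d} : Finset V) = H := by
    apply triple_eq_face hH
    · exact hH1 (by rw [hs1]; simp)
    · exact hH1 (by rw [hs1]; simp)
    · exact hH2 (by rw [hs2]; simp)
    · exact hbc
    · exact hcd
    · exact hbd
  -- d ∈ Z.seq (t+3)
  have hdisj13 : Z.seq (t + 1) ∩ Z.seq (t + 3) = ∅ := h4 (t + 1)
  have hcnot3 : c ∉ Z.seq (t + 3) := by
    intro hc3
    have : c ∈ Z.seq (t + 1) ∩ Z.seq (t + 3) :=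
      Finset.mem_inter.mpr ⟨by rw [hs1]; simp, hc3⟩
    rw [hdisj13] at this; exact absurd this (Finset.notMem_empty c)
  have hd3 : d ∈ Z.seq (t + 3) := by
    obtain ⟨w, hw⟩ := (hA (t + 2)).2.1
    have hw2 := Finset.mem_inter.mp hw
    have hw' : w ∈ ({c, d} : Finset V) := hs2 ▸ hw2.1
    simp only [Finset.mem_insert, Finset.mem_singleton] at hw'
    rcases hw' with rfl | rfl
    · exact absurd hw2.2 hcnot3
    · exact hw2.2
  refine ⟨H, d, ⟨hp1, ⟨hs2, hcd, hd3⟩, hHeq, hbc, hcd, hbd, hH⟩, hHne, hdF, hs2⟩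

/-- Key lemma: if `M_F = id` then after a configuration in `F` the zigzag
returns to `F` with the same oriented edge, followed by the next edge of `F`;
in between there is no edge of `F`. -/
lemma cfg_return {Z : T.Zigzag} {F : Finset V} {t : ℕ} {a b c : V}
    (hM : T.MFIsId F) (h : Cfg T Z F t a b c) :
    ∃ r, t + 1 < r ∧ Cfg T Z F r b c a ∧
      ∀ k, t + 1 < k → k < r → ¬ Z.seq k ⊆ F := by
  obtain ⟨hp0, hp1, hFeq, hab, hbc, hac, hFmem⟩ := h
  have hbF : b ∈ F := by rw [← hFeq]; simp
  have hcF : c ∈ F := by rw [← hFeq]; simp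
  have haF : a ∈ F := by rw [← hFeq]; simp
  obtain ⟨-, -, Z', i', j', ⟨z, hzF, hzb, hzc, hpz⟩, hpi1, hij, hpj, -, -, hNB⟩ :=
    hM b c hbF hcF hbc
  have hza : z = a := by
    rw [← hFeq] at hzF
    simp only [Finset.mem_insert, Finset.mem_singleton] at hzF
    tauto
  rw [hza] at hpz
  have h0 : Z'.seq i' = Z.seq t := by rw [hpz.1, hp0.1]
  have h1 : Z'.seq (i' + 1) = Z.seq (t + 1) := by rw [hpi1.1, hp1.1]
  have hdet : ∀ m, Z'.seq (i' + m) = Z.seq (t + m) := det Z'.isZigzag Z.isZigzag h0 h1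
  obtain ⟨hE, hA, h3, h4⟩ := Z.isZigzag
  obtain ⟨r, hrdef⟩ : ∃ r, r = t + (j' - i') := ⟨_, rfl⟩
  have hij2 : i' + 2 ≤ j' := hij
  have hseqr : Z.seq r = {b, c} := by
    have := hdet (j' - i')
    rw [show i' + (j' - i') = j' by omega] at this
    rw [hrdef, ← this]; exact hpj.1
  have hseqr1 : Z.seq (r + 1) = Z'.seq (j' + 1) := by
    have := hdet (j' - i' + 1)
    rw [show i' + (j' - i' + 1) = j' + 1 by omega,
      show t + (j' - i' + 1) = r + 1 by omega] at this
    exact this.symm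
  have hpr : Z.Passes r b c := ⟨hseqr, hbc, hseqr1 ▸ hpj.2.2⟩
  have htr : t + 1 < r := by omega
  -- no edge of F strictly between t+1 and r
  have hNoF : ∀ k, t + 1 < k → k < r → ¬ Z.seq k ⊆ F := by
    intro k hk1 hk2 hsub
    obtain ⟨x, y, hxy, hxyeq⟩ := Finset.card_eq_two.mp (hE k).1
    obtain ⟨w, hw⟩ := (hA k).2.1
    have hw2 := Finset.mem_inter.mp hw
    have hkk : Z'.seq (i' + (k - t)) = Z.seq k := by
      have := hdet (k - t); rw [show t + (k - t) = k by omega] at this; exact this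
    have hkk1 : Z'.seq (i' + (k - t) + 1) = Z.seq (k + 1) := by
      have := hdet (k - t + 1)
      rw [show t + (k - t + 1) = k + 1 by omega, show i' + (k - t + 1) = i' + (k - t) + 1
        by omega] at this
      exact this
    have hk'1 : i' + 1 < i' + (k - t) := by omega
    have hk'2 : i' + (k - t) < j' := by omega
    have hwmem : w ∈ ({x, y} : Finset V) := hxyeq ▸ hw2.1
    simp only [Finset.mem_insert, Finset.mem_singleton] at hwmem
    rcases hwmem with rfl | rfl
    · exact hNB _ hk'1 hk'2 y w (hsub (by rw [hxyeq]; simp)) (hsub (by rw [hxyeq]; simp))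
        ⟨by rw [hkk, hxyeq, Finset.pair_comm], hxy.symm, hkk1 ▸ hw2.2⟩
    · exact hNB _ hk'1 hk'2 x w (hsub (by rw [hxyeq]; simp)) (hsub (by rw [hxyeq]; simp))
        ⟨by rw [hkk, hxyeq], hxy, hkk1 ▸ hw2.2⟩
  -- r ≥ t + 3
  have hrt3 : t + 3 ≤ r := by
    rcases Nat.lt_or_ge r (t + 3) with hlt | hge
    · exfalso
      have hrt2 : r = t + 2 := by omega
      have : b ∈ Z.seq t ∩ Z.seq (t + 2) :=
        Finset.mem_inter.mpr ⟨by rw [hp0.1]; simp, by rw [← hrt2, hseqr]; simp⟩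
      rw [h4 t] at this; exact absurd this (Finset.notMem_empty b)
    · exact hge
  obtain ⟨s, rfl⟩ : ∃ s, r = s + 1 := ⟨r - 1, by omega⟩
  -- identify the faces around position s, s+1
  obtain ⟨hnes, hints, H1, hH1, hH1a, hH1b⟩ := hA s
  obtain ⟨hnes1, hints1, H2, hH2, hH2a, hH2b⟩ := hA (s + 1)
  have hsnotF : ¬ Z.seq s ⊆ F := hNoF s (by omega) (by omega)
  have hH1ne : H1 ≠ F := fun hh => hsnotF (hh ▸ hH1a)
  have hH1H2 : H1 ≠ H2 := h3 s H1 hH1 H2 hH2 hH1a hH1b hH2a hH2b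
  have hbcF : ({b, c} : Finset V) ⊆ F := by
    intro x hx; simp only [Finset.mem_insert, Finset.mem_singleton] at hx
    rcases hx with rfl | rfl <;> assumption
  have hH2F : H2 = F := by
    rcases two_faces (show ({b, c} : Finset V).card = 2 from Finset.card_pair hbc)
      hFmem hH1 hH2 hbcF (hseqr ▸ hH1b) (hseqr ▸ hH2a) (fun hh => hH1ne hh.symm) with h | h
    · exact h
    · exact absurd h.symm hH1H2
  -- Z.seq (s+2) = {a, c}
  have hs2F : Z.seq (s + 1 + 1) ⊆ F := hH2F ▸ hH2b
  have hcs2 : c ∈ Z.seq (s + 1 + 1) := hpr.2.2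
  have hbs2 : b ∉ Z.seq (s + 1 + 1) := by
    intro hbs
    have hsub : ({b, c} : Finset V) ⊆ Z.seq (s + 1 + 1) := by
      intro x hx; simp only [Finset.mem_insert, Finset.mem_singleton] at hx
      rcases hx with rfl | rfl <;> assumption
    have : ({b, c} : Finset V) = Z.seq (s + 1 + 1) :=
      Finset.eq_of_subset_of_card_le hsub (by rw [(hE (s + 1 + 1)).1, Finset.card_pair hbc])
    exact hnes1 (hseqr.trans this)
  have hseqs2 : Z.seq (s + 1 + 1) = {a, c} := by
    have hsub : Z.seq (s + 1 + 1) ⊆ ({a, c} : Finset V) := by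
      intro x hx
      have hxF : x ∈ F := hs2F hx
      rw [← hFeq] at hxF
      simp only [Finset.mem_insert, Finset.mem_singleton] at hxF ⊢
      rcases hxF with rfl | rfl | rfl
      · tauto
      · exact absurd hx hbs2
      · tauto
    exact Finset.eq_of_subset_of_card_le hsub
      (by rw [Finset.card_pair hac, (hE (s + 1 + 1)).1])
  -- a ∈ Z.seq (s+3)
  have hcnot : c ∉ Z.seq (s + 1 + 2) := by
    intro hc3
    have : c ∈ Z.seq (s + 1) ∩ Z.seq (s + 1 + 2) :=
      Finset.mem_inter.mpr ⟨by rw [hseqr]; simp, hc3⟩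
    rw [h4 (s + 1)] at this; exact absurd this (Finset.notMem_empty c)
  have ha3 : a ∈ Z.seq (s + 1 + 2) := by
    obtain ⟨w, hw⟩ := (hA (s + 1 + 1)).2.1
    have hw2 := Finset.mem_inter.mp hw
    have hw' : w ∈ ({a, c} : Finset V) := hseqs2 ▸ hw2.1
    simp only [Finset.mem_insert, Finset.mem_singleton] at hw'
    rcases hw' with rfl | rfl
    · exact hw2.2
    · exact absurd hw2.2 hcnot
  have hpca : Z.Passes (s + 1 + 1) c a :=
    ⟨by rw [hseqs2, Finset.pair_comm], fun hh => hac hh.symm, ha3⟩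
  have hbca : ({b, c, a} : Finset V) = F := by
    rw [← hFeq]; ext x
    simp only [Finset.mem_insert, Finset.mem_singleton]; tauto
  exact ⟨s + 1, htr, ⟨hpr, hpca, hbca, hbc, fun hh => hac hh.symm, fun hh => hab hh.symm, hFmem⟩,
    hNoF⟩

end Triangulation
private lemma getVert_support {W : Type} {G : SimpleGraph W} {u v : W} (p : G.Walk u v) :
    ∀ i, ∀ h : i < p.support.length, p.getVert i = p.support[i] := by
  induction p with
  | nil =>
    intro i h
    simp only [SimpleGraph.Walk.support_nil, List.length_cons, List.length_nil] at h
    interval_cases i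
    simp [SimpleGraph.Walk.getVert_zero]
  | cons h' q ih =>
    intro i h
    cases i with
    | zero => simp [SimpleGraph.Walk.getVert_zero]
    | succ k =>
      have h2 : k < q.support.length := by
        simpa [SimpleGraph.Walk.support_cons] using h
      simp only [SimpleGraph.Walk.getVert_cons_succ, SimpleGraph.Walk.support_cons,
        List.getElem_cons_succ]
      exact ih k h2

private lemma cycle_getVert_inj {W : Type} {G : SimpleGraph W} {v : W} {p : G.Walk v v}
    (hp : p.IsCycle) {i j : ℕ} (hi : i < p.length) (hj : j < p.length)
    (h : p.getVert i = p.getVert j) : i = j := by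
  have hnd : p.support.tail.Nodup := hp.support_nodup
  have hlen : p.support.length = p.length + 1 := SimpleGraph.Walk.length_support p
  have hcons : p.support = v :: p.support.tail := SimpleGraph.Walk.support_eq_cons p
  have htl : p.support.tail.length = p.length := by
    have := congrArg List.length hcons
    simp only [List.length_cons] at this
    omega
  have hget : ∀ k, ∀ hk : k < p.length, p.getVert (k + 1) = p.support.tail[k]'(by omega) := by
    intro k hk
    rw [getVert_support p (k + 1) (by omega), List.getElem_of_eq hcons, List.getElem_cons_succ]
  have hn1 : 1 ≤ p.length := by omega
  cases i with
  | zero =>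
    cases j with
    | zero => rfl
    | succ j' =>
      exfalso
      have h0 : p.getVert 0 = p.getVert p.length := by
        rw [SimpleGraph.Walk.getVert_zero, SimpleGraph.Walk.getVert_length]
      obtain ⟨l, hl⟩ : ∃ l, p.length = l + 1 := ⟨p.length - 1, by omega⟩
      have e1 : p.support.tail[l]'(by omega) = p.support.tail[j']'(by omega) := by
        rw [← hget l (by omega), ← hget j' (by omega), ← hl, ← h0, h]
      have := (hnd.getElem_inj_iff).mp e1
      omega
  | succ i' =>
    cases j with
    | zero =>
      exfalso
      have h0 : p.getVert 0 = p.getVert p.length := by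
        rw [SimpleGraph.Walk.getVert_zero, SimpleGraph.Walk.getVert_length]
      obtain ⟨l, hl⟩ : ∃ l, p.length = l + 1 := ⟨p.length - 1, by omega⟩
      have e1 : p.support.tail[i']'(by omega) = p.support.tail[l]'(by omega) := by
        rw [← hget l (by omega), ← hget i' (by omega), ← hl, h, h0]
      have := (hnd.getElem_inj_iff).mp e1
      omega
    | succ j' =>
      have e1 : p.support.tail[i']'(by omega) = p.support.tail[j']'(by omega) := by
        rw [← hget i' (by omega), ← hget j' (by omega), h]
      have := (hnd.getElem_inj_iff).mp e1
      omega

set_option maxHeartbeats 2000000 in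
/-- the subgraph `G₁` of the dual graph induced by the faces
with identity z-monodromy (type (M1)) is a forest. -/
theorem G1_is_forest {V : Type} [Fintype V] [DecidableEq V]
    (T : Triangulation V) :
    (T.dualGraph.induce
      {A : {F : Finset V // F ∈ T.faces} | T.MFIsId (A : Finset V)}).IsAcyclic := by
  intro v c hc
  have hn3 : 3 ≤ c.length := hc.three_le_length
  set n := c.length with hn
  let Fc : ℕ → Finset V := fun k => ((c.getVert k).1 : Finset V)
  have hface : ∀ k, Fc k ∈ T.faces := fun k => (c.getVert k).1.2
  have hM1 : ∀ k, T.MFIsId (Fc k) := fun k => (c.getVert k).2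
  have hAdjD : ∀ k, k < n → T.dualGraph.Adj (c.getVert k).1 (c.getVert (k + 1)).1 := by
    intro k hk
    exact c.adj_getVert_succ hk
  have hne : ∀ k, k < n → Fc k ≠ Fc (k + 1) := fun k hk h => (hAdjD k hk).1 (Subtype.ext h)
  have hcard2 : ∀ k, k < n → (Fc k ∩ Fc (k + 1)).card = 2 := fun k hk => (hAdjD k hk).2
  have hend : Fc n = Fc 0 := by
    show ((c.getVert n).1 : Finset V) = ((c.getVert 0).1 : Finset V)
    rw [hn, SimpleGraph.Walk.getVert_length, SimpleGraph.Walk.getVert_zero]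
  have hinj : ∀ a b, a < n → b < n → Fc a = Fc b → a = b := by
    intro a b ha hb h
    exact cycle_getVert_inj hc ha hb (Subtype.ext (Subtype.ext h))
  let e : ℕ → Finset V := fun k => Fc k ∩ Fc (k + 1)
  have hediff : ∀ k, k + 1 < n → e (k + 1) ≠ e k := by
    intro k hk h
    have h1 : e k ⊆ Fc k := Finset.inter_subset_left
    have h2 : e k ⊆ Fc (k + 1) := Finset.inter_subset_right
    have h3 : e k ⊆ Fc (k + 2) := by
      rw [← h]; exact Finset.inter_subset_right
    have hcard : (e k).card = 2 := hcard2 k (by omega)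
    rcases Triangulation.two_faces hcard (hface k) (hface (k + 1)) (hface (k + 2)) h1 h2 h3
        (hne k (by omega)) with hh | hh
    · rcases Nat.lt_or_ge (k + 2) n with hlt | hge
      · have := hinj _ _ hlt (by omega) hh; omega
      · have hk2 : k + 2 = n := by omega
        rw [hk2, hend] at hh
        have := hinj 0 k (by omega) (by omega) hh; omega
    · rcases Nat.lt_or_ge (k + 2) n with hlt | hge
      · have := hinj _ _ hlt (by omega) hh; omega
      · have hk2 : k + 2 = n := by omega
        rw [hk2, hend] at hh
        have := hinj 0 (k + 1) (by omega) (by omega) hh; omega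
  -- Base configuration from the monodromy of F₀ at the edge e₀
  obtain ⟨x, y, hxy, hxyE⟩ := Finset.card_eq_two.mp (hcard2 0 (by omega))
  have hxe : x ∈ e 0 := by show x ∈ Fc 0 ∩ Fc (0 + 1); rw [hxyE]; simp
  have hye : y ∈ e 0 := by show y ∈ Fc 0 ∩ Fc (0 + 1); rw [hxyE]; simp
  have hxF0 : x ∈ Fc 0 := (Finset.mem_inter.mp hxe).1
  have hyF0 : y ∈ Fc 0 := (Finset.mem_inter.mp hye).1
  obtain ⟨-, -, Z, i, j, ⟨z, hzF, hzx, hzy, hpz⟩, hpi1, hij, hpj, -, -, hNB⟩ :=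
    hM1 0 x y hxF0 hyF0 hxy
  have hcfg0 : Triangulation.Cfg T Z (Fc 0) i z x y :=
    ⟨hpz, hpi1, Triangulation.triple_eq_face (hface 0) hzF hxF0 hyF0 hzx hxy hzy,
      hzx, hxy, hzy, hface 0⟩
  obtain ⟨G1, w, hcfg1, hG1ne, hwF, hseq2⟩ := Triangulation.cfg_next hcfg0
  have hG1 : G1 = Fc 1 := by
    have hGsub : e 0 ⊆ G1 := by
      show Fc 0 ∩ Fc (0 + 1) ⊆ G1
      rw [hxyE, ← hcfg1.2.2.1]
      intro u hu; simp only [Finset.mem_insert, Finset.mem_singleton] at hu ⊢; tauto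
    rcases Triangulation.two_faces (hcard2 0 (by omega)) (hface 0) (hface 1)
        hcfg1.2.2.2.2.2.2 Finset.inter_subset_left Finset.inter_subset_right hGsub
        (hne 0 (by omega)) with hh | hh
    · exact absurd hh hG1ne
    · exact hh
  rw [hG1] at hcfg1
  -- the invariant
  let Inv : ℕ → Prop := fun k => ∃ t cc α β γ, Triangulation.Cfg T Z (Fc k) t α β γ ∧
    ({α, β} : Finset V) = e (k - 1) ∧ i + 1 ≤ t ∧ t + 1 < cc ∧
    Z.seq cc = {α, β} ∧ cc + k ≤ j + 1
  have hbase : Inv 1 := by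
    refine ⟨i + 1, j, x, y, w, hcfg1, hxyE.symm, le_rfl, ?_, hpj.1, le_rfl⟩
    have hji2 : j ≠ i + 2 := by
      intro hh
      have h1 : Z.seq j = {y, w} := by rw [hh]; exact hseq2
      rw [hpj.1] at h1
      have hx' : x ∈ ({y, w} : Finset V) := by rw [← h1]; simp
      simp only [Finset.mem_insert, Finset.mem_singleton] at hx'
      rcases hx' with hh' | hh'
      · exact hxy hh'
      · exact hwF (hh' ▸ hxF0)
    omega
  have hstep : ∀ m, 1 ≤ m → m + 1 ≤ n - 1 → Inv m → Inv (m + 1) := by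
    rintro m hm1 hm2 ⟨t, cc, α, β, γ, hcfg, hαβ, ht0, htc, hseqc, hccb⟩
    have hmn : m < n := by omega
    have hFceq : ({α, β, γ} : Finset V) = Fc m := hcfg.2.2.1
    have hab : α ≠ β := hcfg.2.2.2.1
    have hbc : β ≠ γ := hcfg.2.2.2.2.1
    have hac : α ≠ γ := hcfg.2.2.2.2.2.1
    have hαm : α ∈ Fc m := by rw [← hFceq]; simp
    have hβm : β ∈ Fc m := by rw [← hFceq]; simp
    have hγm : γ ∈ Fc m := by rw [← hFceq]; simp
    have hem2 : (e m).card = 2 := hcard2 m hmn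
    have hemsub : e m ⊆ ({α, β, γ} : Finset V) := by
      rw [hFceq]; exact Finset.inter_subset_left
    have hemne : e m ≠ e (m - 1) := by
      have := hediff (m - 1) (by omega)
      rwa [show m - 1 + 1 = m by omega] at this
    obtain ⟨r, hr, hcfgr, hNoF⟩ := Triangulation.cfg_return (hM1 m) hcfg
    have hccsub : Z.seq cc ⊆ Fc m := by
      rw [hseqc, ← hFceq]
      intro u hu; simp only [Finset.mem_insert, Finset.mem_singleton] at hu ⊢; tauto
    have hrcc : r < cc := by
      have hle : r ≤ cc := by
        by_contra hgt
        exact hNoF cc htc (by omega) hccsub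
      have hne' : r ≠ cc := by
        intro hh
        have h1 : Z.seq r = {α, β} := by rw [hh]; exact hseqc
        rw [hcfgr.1.1] at h1
        have hγ' : γ ∈ ({α, β} : Finset V) := by rw [← h1]; simp
        simp only [Finset.mem_insert, Finset.mem_singleton] at hγ'
        rcases hγ' with hh' | hh'
        · exact hac hh'.symm
        · exact hbc hh'.symm
      omega
    rcases Triangulation.subset_three hemsub hem2 with hcase | hcase | hcase
    · exact absurd (hcase.trans hαβ) hemne
    · -- e m = {β, γ}
      obtain ⟨G, δ, hcfg2, hGne, hδ, hseqG⟩ := Triangulation.cfg_next hcfg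
      have hGeq : G = Fc (m + 1) := by
        have hsubG : e m ⊆ G := by
          rw [hcase, ← hcfg2.2.2.1]
          intro u hu; simp only [Finset.mem_insert, Finset.mem_singleton] at hu ⊢; tauto
        rcases Triangulation.two_faces hem2 (hface m) (hface (m + 1)) hcfg2.2.2.2.2.2.2
            Finset.inter_subset_left Finset.inter_subset_right hsubG (hne m hmn) with hh | hh
        · exact absurd hh hGne
        · exact hh
      rw [hGeq] at hcfg2
      have hrt2 : t + 2 < r := by
        have hne'' : r ≠ t + 2 := by
          intro hh
          have h1 : Z.seq r = {γ, δ} := by rw [hh]; exact hseqG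
          rw [hcfgr.1.1] at h1
          have hβ' : β ∈ ({γ, δ} : Finset V) := by rw [← h1]; simp
          simp only [Finset.mem_insert, Finset.mem_singleton] at hβ'
          rcases hβ' with hh' | hh'
          · exact hbc hh'
          · exact hδ (hh' ▸ hβm)
        omega
      exact ⟨t + 1, r, β, γ, δ, hcfg2, hcase.symm, by omega, hrt2, hcfgr.1.1, by omega⟩
    · -- e m = {α, γ}
      obtain ⟨G, δ, hcfg2, hGne, hδ, hseqG⟩ := Triangulation.cfg_next hcfgr
      have hGeq : G = Fc (m + 1) := by
        have hsubG : e m ⊆ G := by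
          rw [hcase, ← hcfg2.2.2.1]
          intro u hu; simp only [Finset.mem_insert, Finset.mem_singleton] at hu ⊢; tauto
        rcases Triangulation.two_faces hem2 (hface m) (hface (m + 1)) hcfg2.2.2.2.2.2.2
            Finset.inter_subset_left Finset.inter_subset_right hsubG (hne m hmn) with hh | hh
        · exact absurd hh hGne
        · exact hh
      rw [hGeq] at hcfg2
      obtain ⟨r', hr', hcfgr', hNoF'⟩ := Triangulation.cfg_return (hM1 m) hcfgr
      have hccr1 : r + 1 < cc := by
        have hne'' : cc ≠ r + 1 := by
          intro hh
          have h1 : Z.seq cc = {γ, α} := by rw [hh]; exact hcfgr.2.1.1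
          rw [hseqc] at h1
          have hβ' : β ∈ ({γ, α} : Finset V) := by rw [← h1]; simp
          simp only [Finset.mem_insert, Finset.mem_singleton] at hβ'
          rcases hβ' with hh' | hh'
          · exact hbc hh'
          · exact hab hh'.symm
        omega
      have hr'cc : r' < cc := by
        have hle : r' ≤ cc := by
          by_contra hgt
          exact hNoF' cc hccr1 (by omega) hccsub
        have hne'' : r' ≠ cc := by
          intro hh
          have h1 : Z.seq r' = {α, β} := by rw [hh]; exact hseqc
          rw [hcfgr'.1.1] at h1
          have hγ' : γ ∈ ({α, β} : Finset V) := by rw [← h1]; simp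
          simp only [Finset.mem_insert, Finset.mem_singleton] at hγ'
          rcases hγ' with hh' | hh'
          · exact hac hh'.symm
          · exact hbc hh'.symm
        omega
      have hr2r' : r + 2 < r' := by
        have hne'' : r' ≠ r + 2 := by
          intro hh
          have h1 : Z.seq r' = {α, δ} := by rw [hh]; exact hseqG
          rw [hcfgr'.1.1] at h1
          have hγ' : γ ∈ ({α, δ} : Finset V) := by rw [← h1]; simp
          simp only [Finset.mem_insert, Finset.mem_singleton] at hγ'
          rcases hγ' with hh' | hh'
          · exact hac hh'.symm
          · exact hδ (hh' ▸ hγm)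
        omega
      refine ⟨r + 1, r', γ, α, δ, hcfg2, ?_, by omega, hr2r', hcfgr'.1.1, by omega⟩
      rw [Finset.pair_comm]
      exact hcase.symm
  have hInv : ∀ k, 1 ≤ k → k ≤ n - 1 → Inv k := by
    intro k
    induction k with
    | zero => intro h1 _; exact absurd h1 (by omega)
    | succ m ih =>
      intro _ hk2
      by_cases hm : m = 0
      · subst hm; exact hbase
      · exact hstep m (by omega) (by omega) (ih (by omega) (by omega))
  -- final contradiction
  obtain ⟨t, cc, α, β, γ, hcfg, hαβ, ht0, htc, hseqc, hccb⟩ := hInv (n - 1) (by omega) le_rfl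
  have hccj : cc < j := by omega
  have hab : α ≠ β := hcfg.2.2.2.1
  have hbc : β ≠ γ := hcfg.2.2.2.2.1
  have hac : α ≠ γ := hcfg.2.2.2.2.2.1
  have hsub0 : e (n - 1) ⊆ Fc 0 := by
    show Fc (n - 1) ∩ Fc (n - 1 + 1) ⊆ Fc 0
    rw [show n - 1 + 1 = n by omega, hend]
    exact Finset.inter_subset_right
  have hcardlast : (e (n - 1)).card = 2 := hcard2 (n - 1) (by omega)
  have hlastne : e (n - 1) ≠ e (n - 2) := by
    have := hediff (n - 2) (by omega)
    rwa [show n - 2 + 1 = n - 1 by omega] at this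
  have hemsub : e (n - 1) ⊆ ({α, β, γ} : Finset V) := by
    rw [hcfg.2.2.1]; exact Finset.inter_subset_left
  rw [show n - 1 - 1 = n - 2 by omega] at hαβ
  rcases Triangulation.subset_three hemsub hcardlast with hcase | hcase | hcase
  · exact hlastne (hcase.trans hαβ)
  · have hβ0 : β ∈ Fc 0 := hsub0 (by rw [hcase]; simp)
    have hγ0 : γ ∈ Fc 0 := hsub0 (by rw [hcase]; simp)
    exact hNB (t + 1) (by omega) (by omega) β γ hβ0 hγ0 hcfg.2.1
  · obtain ⟨r, hr, hcfgr, hNoF⟩ := Triangulation.cfg_return (hM1 (n - 1)) hcfg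
    have hccsub : Z.seq cc ⊆ Fc (n - 1) := by
      rw [hseqc, ← hcfg.2.2.1]
      intro u hu; simp only [Finset.mem_insert, Finset.mem_singleton] at hu ⊢; tauto
    have hrcc : r < cc := by
      have hle : r ≤ cc := by
        by_contra hgt
        exact hNoF cc htc (by omega) hccsub
      have hne'' : r ≠ cc := by
        intro hh
        have h1 : Z.seq r = {α, β} := by rw [hh]; exact hseqc
        rw [hcfgr.1.1] at h1
        have hγ' : γ ∈ ({α, β} : Finset V) := by rw [← h1]; simp
        simp only [Finset.mem_insert, Finset.mem_singleton] at hγ'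
        rcases hγ' with hh' | hh'
        · exact hac hh'.symm
        · exact hbc hh'.symm
      omega
    have hr1cc : r + 1 < cc := by
      have hne'' : cc ≠ r + 1 := by
        intro hh
        have h1 : Z.seq cc = {γ, α} := by rw [hh]; exact hcfgr.2.1.1
        rw [hseqc] at h1
        have hβ' : β ∈ ({γ, α} : Finset V) := by rw [← h1]; simp
        simp only [Finset.mem_insert, Finset.mem_singleton] at hβ'
        rcases hβ' with hh' | hh'
        · exact hbc hh'
        · exact hab hh'.symm
      omega
    have hα0 : α ∈ Fc 0 := hsub0 (by rw [hcase]; simp)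
    have hγ0 : γ ∈ Fc 0 := hsub0 (by rw [hcase]; simp)
    exact hNB (r + 1) (by omega) (by omega) γ α hγ0 hα0 hcfgr.2.1
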